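/- Let c ≥ 0 and β ≥ 0. Then f_{c,β} is strictly decreasing on (0, ∞) and f_{c,β}(λ) → ∞ as λ → 0⁺. Moreover, if β > 0 then f_{c,β}(1/(2√β)) = 0, while if β = 0 then f_{c,0}(λ) > 0 for all λ > 0 and f_{c,0}(λ) → 0 as λ → ∞. -/

import Mathlib

/-- `ρ_c(λ) = (e^{2πλ} - 1)/(e^{2πλ + c/2} - 1)`. -/
noncomputable def rhoC (c lam : ℝ) : ℝ :=
  (Real.exp (2 * Real.pi * lam) - 1) / (Real.exp (2 * Real.pi * lam + c / 2) - 1)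

/-- `f_{c,β}(λ) = (1 - 4βλ²)/(2λ ρ_c(λ))`. -/
noncomputable def fCB (c β lam : ℝ) : ℝ := (1 - 4 * β * lam ^ 2) / (2 * lam * rhoC c lam)

open Real Filter Set

noncomputable def Hc (c x : ℝ) : ℝ :=
  (Real.exp (2 * Real.pi * x + c / 2) - 1) / (Real.exp (2 * Real.pi * x) - 1)

lemma Npos {x : ℝ} (hx : 0 < x) : 0 < Real.exp (2 * Real.pi * x) - 1 := by
  have h : (0:ℝ) < 2 * Real.pi * x := by positivity
  have := Real.one_lt_exp_iff.2 h
  linarith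

lemma Dpos {c x : ℝ} (hc : 0 ≤ c) (hx : 0 < x) :
    0 < Real.exp (2 * Real.pi * x + c / 2) - 1 := by
  have h : (0:ℝ) < 2 * Real.pi * x + c / 2 := by positivity
  have := Real.one_lt_exp_iff.2 h
  linarith

lemma Hc_eq {c x : ℝ} (hx : 0 < x) :
    Hc c x = Real.exp (c/2) + (Real.exp (c/2) - 1) / (Real.exp (2 * Real.pi * x) - 1) := by
  have hN := Npos hx
  rw [Hc, Real.exp_add]
  field_simp
  ring

lemma Hc_pos {c x : ℝ} (hc : 0 ≤ c) (hx : 0 < x) : 0 < Hc c x :=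
  div_pos (Dpos hc hx) (Npos hx)

lemma one_le_Hc {c x : ℝ} (hc : 0 ≤ c) (hx : 0 < x) : 1 ≤ Hc c x := by
  rw [Hc_eq hx]
  have h1 : (1:ℝ) ≤ Real.exp (c/2) := Real.one_le_exp (by positivity)
  have h2 : 0 ≤ (Real.exp (c/2) - 1) / (Real.exp (2 * Real.pi * x) - 1) :=
    div_nonneg (by linarith) (Npos hx).le
  linarith

lemma Hc_anti {c x y : ℝ} (hc : 0 ≤ c) (hx : 0 < x) (hxy : x ≤ y) :
    Hc c y ≤ Hc c x := by
  have hy : 0 < y := lt_of_lt_of_le hx hxy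
  rw [Hc_eq hx, Hc_eq hy]
  have h1 : (1:ℝ) ≤ Real.exp (c/2) := Real.one_le_exp (by positivity)
  have hNx := Npos hx
  have hmono : Real.exp (2 * Real.pi * x) - 1 ≤ Real.exp (2 * Real.pi * y) - 1 := by
    have : 2 * Real.pi * x ≤ 2 * Real.pi * y := by
      have := Real.pi_pos; nlinarith
    linarith [Real.exp_le_exp.2 this]
  have := div_le_div_of_nonneg_left (by linarith : (0:ℝ) ≤ Real.exp (c/2) - 1) hNx hmono
  linarith

lemma fCB_eq {c β x : ℝ} (hc : 0 ≤ c) (hx : 0 < x) :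
    fCB c β x = (1 / (2 * x)) * Hc c x - 2 * β * (x * Hc c x) := by
  have hN := Npos hx
  have hD := Dpos hc hx
  rw [fCB, rhoC, Hc]
  field_simp
  ring

lemma G_strictMono {c : ℝ} (hc : 0 ≤ c) :
    StrictMonoOn (fun x => x * Hc c x) (Ioi (0:ℝ)) := by
  apply strictMonoOn_of_deriv_pos (convex_Ioi 0)
  · apply ContinuousOn.mul continuousOn_id
    apply ContinuousOn.div
    · fun_prop
    · fun_prop
    · intro x hx
      exact ne_of_gt (Npos hx)
  · intro x hx
    rw [interior_Ioi] at hx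
    have hxpos : (0:ℝ) < x := hx
    have hN := Npos hxpos
    have hD := Dpos hc hxpos
    set U := Real.exp (2 * Real.pi * x) with hU
    set E := Real.exp (2 * Real.pi * x + c / 2) with hE
    have hUE : E = Real.exp (c/2) * U := by rw [hE, hU, Real.exp_add]; ring
    have hinner : HasDerivAt (fun y : ℝ => 2 * Real.pi * y) (2 * Real.pi) x := by
      simpa using (hasDerivAt_id x).const_mul (2 * Real.pi)
    have hNder : HasDerivAt (fun y => Real.exp (2 * Real.pi * y) - 1) (U * (2 * Real.pi)) x :=
      (hinner.exp).sub_const 1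
    have hDder : HasDerivAt (fun y => Real.exp (2 * Real.pi * y + c / 2) - 1)
        (E * (2 * Real.pi)) x := ((hinner.add_const (c/2)).exp).sub_const 1
    have hHder : HasDerivAt (Hc c)
        ((E * (2 * Real.pi) * (U - 1) - (E - 1) * (U * (2 * Real.pi))) / (U - 1) ^ 2) x := by
      have := hDder.div hNder (ne_of_gt hN)
      exact this
    have hGder : HasDerivAt (fun y => y * Hc c y)
        (1 * Hc c x + x * ((E * (2 * Real.pi) * (U - 1) - (E - 1) * (U * (2 * Real.pi))) / (U - 1) ^ 2)) x :=
      (hasDerivAt_id x).mul hHder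
    rw [hGder.deriv]
    -- key inequality : 2*(2πx)*U < U^2 - 1
    have hk : (1:ℝ) ≤ Real.exp (c/2) := Real.one_le_exp (by positivity)
    have ht : (0:ℝ) < 2 * Real.pi * x := by positivity
    have hsinh : 2 * Real.pi * x < Real.sinh (2 * Real.pi * x) :=
      Real.self_lt_sinh_iff.2 ht
    have hkey : 2 * (2 * Real.pi * x) * U < U ^ 2 - 1 := by
      have hexp : Real.sinh (2 * Real.pi * x)
          = (U - U⁻¹) / 2 := by
        rw [Real.sinh_eq, hU, Real.exp_neg]
      have hUpos : 0 < U := Real.exp_pos _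
      have hUinv : U * U⁻¹ = 1 := mul_inv_cancel₀ (ne_of_gt hUpos)
      rw [hexp] at hsinh
      nlinarith
    have hHval : Hc c x = (E - 1) / (U - 1) := by rw [Hc, hU, hE]
    rw [hHval]
    have hnum : E * (2 * Real.pi) * (U - 1) - (E - 1) * (U * (2 * Real.pi))
        = 2 * Real.pi * (U - E) := by ring
    rw [hnum]
    have hs : 0 ≤ Real.exp (c/2) - 1 := by linarith
    have hN2 : 0 < U - 1 := by linarith
    have hrw : 1 * ((E - 1) / (U - 1)) + x * (2 * Real.pi * (U - E) / (U - 1) ^ 2)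
        = ((E - 1) * (U - 1) + x * (2 * Real.pi * (U - E))) / (U - 1) ^ 2 := by
      field_simp
    rw [hrw]
    apply div_pos _ (by positivity)
    rw [hUE]
    have key2 : (Real.exp (c/2) - 1) * (2 * (2 * Real.pi * x) * U)
        ≤ (Real.exp (c/2) - 1) * (U ^ 2 - 1) :=
      mul_le_mul_of_nonneg_left hkey.le hs
    nlinarith [key2, mul_pos hN2 hN2, mul_nonneg hs (mul_pos hN2 hN2).le, hk]

theorem rotating_waves_stmt_7 (c β : ℝ) (hc : 0 ≤ c) (hβ : 0 ≤ β) :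
    StrictAntiOn (fCB c β) (Set.Ioi (0 : ℝ)) ∧
    Filter.Tendsto (fCB c β) (nhdsWithin 0 (Set.Ioi 0)) Filter.atTop ∧
    (0 < β → fCB c β (1 / (2 * Real.sqrt β)) = 0) ∧
    (β = 0 → (∀ lam ∈ Set.Ioi (0 : ℝ), 0 < fCB c 0 lam) ∧
      Filter.Tendsto (fCB c 0) Filter.atTop (nhds 0)) := by
  refine ⟨?_, ?_, ?_, ?_⟩
  · -- strict anti
    intro x hx y hy hxy
    have hx0 : (0:ℝ) < x := hx
    have hy0 : (0:ℝ) < y := hy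
    rw [fCB_eq hc hx0, fCB_eq hc hy0]
    have hHy := Hc_pos hc hy0
    have hHx := Hc_pos hc hx0
    have hanti := Hc_anti hc hx0 hxy.le
    have hA : (1 / (2 * y)) * Hc c y < (1 / (2 * x)) * Hc c x := by
      have h1 : (1 / (2 * y)) * Hc c y ≤ (1 / (2 * y)) * Hc c x :=
        mul_le_mul_of_nonneg_left hanti (by positivity)
      have h2 : (1 / (2 * y)) * Hc c x < (1 / (2 * x)) * Hc c x := by
        apply mul_lt_mul_of_pos_right _ hHx
        rw [div_lt_div_iff₀ (by positivity) (by positivity)]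
        nlinarith
      linarith
    have hB : x * Hc c x < y * Hc c y := G_strictMono hc hx hy hxy
    nlinarith
  · -- tendsto atTop at 0+
    set δ : ℝ := min 1 (1 / (4 * β + 1)) with hδ
    have hδpos : 0 < δ := lt_min one_pos (by positivity)
    have hbound : ∀ x ∈ Ioo (0:ℝ) δ, x⁻¹ / 2 + -(2 * β) ≤ fCB c β x := by
      intro x hxm
      obtain ⟨hx0, hxδ⟩ := hxm
      have hx1 : x ≤ 1 := le_of_lt (lt_of_lt_of_le hxδ (min_le_left _ _))
      have hx2 : x < 1 / (4 * β + 1) := lt_of_lt_of_le hxδ (min_le_right _ _)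
      have hfac : 0 ≤ 1 / (2 * x) - 2 * β * x := by
        rw [sub_nonneg, le_div_iff₀ (by positivity : (0:ℝ) < 2 * x)]
        have hx2' : x * (4 * β + 1) < 1 := (lt_div_iff₀ (by positivity)).1 hx2
        nlinarith [mul_nonneg (mul_nonneg hβ hx0.le) (by linarith : (0:ℝ) ≤ 1 - x)]
      rw [fCB_eq hc hx0]
      have hH1 := one_le_Hc hc hx0
      have hmul : (1 / (2 * x) - 2 * β * x) * 1 ≤ (1 / (2 * x) - 2 * β * x) * Hc c x :=
        mul_le_mul_of_nonneg_left hH1 hfac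
      have e1 : (1 / (2 * x)) * Hc c x - 2 * β * (x * Hc c x)
          = (1 / (2 * x) - 2 * β * x) * Hc c x := by ring
      have hxinv : 1 / (2 * x) = x⁻¹ / 2 := by
        rw [one_div, mul_inv]; ring
      have hβx : 2 * β * x ≤ 2 * β := by nlinarith [mul_nonneg hβ (by linarith : (0:ℝ) ≤ 1 - x)]
      rw [e1]
      linarith [hmul, hxinv]
    have h1 : Tendsto (fun x : ℝ => x⁻¹ / 2 + -(2 * β)) (nhdsWithin 0 (Ioi 0)) atTop :=
      tendsto_atTop_add_const_right _ _ (tendsto_inv_nhdsGT_zero.atTop_div_const two_pos)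
    apply tendsto_atTop_mono' _ _ h1
    filter_upwards [Ioo_mem_nhdsGT hδpos] with x hxm using hbound x hxm
  · intro hβpos
    have hβne : Real.sqrt β ≠ 0 := by positivity
    have hnum : 1 - 4 * β * (1 / (2 * Real.sqrt β)) ^ 2 = 0 := by
      have : Real.sqrt β ^ 2 = β := Real.sq_sqrt hβ
      field_simp
      nlinarith [this]
    rw [fCB, hnum, zero_div]
  · intro hβ0
    constructor
    · intro x hx
      have hx0 : (0:ℝ) < x := hx
      rw [fCB_eq hc hx0]
      have := Hc_pos hc hx0
      have : 0 < (1 / (2 * x)) * Hc c x := by positivity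
      simpa using this
    · -- tendsto 0 at infty
      have hub : ∀ x ≥ (1:ℝ), fCB c 0 x ≤ Hc c 1 / (2 * x) := by
        intro x hx1
        have hx0 : (0:ℝ) < x := lt_of_lt_of_le one_pos hx1
        rw [fCB_eq hc hx0]
        have h := Hc_anti hc one_pos hx1
        have : (1 / (2 * x)) * Hc c x ≤ (1 / (2 * x)) * Hc c 1 :=
          mul_le_mul_of_nonneg_left h (by positivity)
        calc (1 / (2 * x)) * Hc c x - 2 * 0 * (x * Hc c x)
            = (1 / (2 * x)) * Hc c x := by ring
          _ ≤ (1 / (2 * x)) * Hc c 1 := this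
          _ = Hc c 1 / (2 * x) := by ring
      have hlb : ∀ x ≥ (1:ℝ), 0 ≤ fCB c 0 x := by
        intro x hx1
        have hx0 : (0:ℝ) < x := lt_of_lt_of_le one_pos hx1
        rw [fCB_eq hc hx0]
        have hH := Hc_pos hc hx0
        have h2 : (2:ℝ) * 0 * (x * Hc c x) = 0 := by ring
        rw [h2, sub_zero]
        positivity
      have hup : Tendsto (fun x : ℝ => Hc c 1 / (2 * x)) atTop (nhds 0) := by
        apply Tendsto.div_atTop tendsto_const_nhds
        exact Tendsto.const_mul_atTop two_pos tendsto_id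
      apply tendsto_of_tendsto_of_tendsto_of_le_of_le' tendsto_const_nhds hup
      · filter_upwards [eventually_ge_atTop (1:ℝ)] with x hx using hlb x hx
      · filter_upwards [eventually_ge_atTop (1:ℝ)] with x hx using hub x hx
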